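/- In the ADT deterministic model with q = n₁, if n₁ − 2n₂ ≥ m₁ − m₂ and n₂ ≤ m₂ ≤ m₁, then for independent binary random vectors x₁, x₂ of length q: H(y_a) − H(y_b) ≤ m₂ − n₂, where y_a = S^{q−m₁}x₁ ⊕ S^{q−m₂}x₂ and y_b = S^{q−n₁}x₁ ⊕ S^{q−n₂}x₂ and H denotes Shannon entropy in bits. -/

import Mathlib

set_option linter.unusedSectionVars false
set_option maxHeartbeats 1000000


open MeasureTheory ProbabilityTheory

instance : MeasurableSpace (ZMod 2) := ⊤
instance : MeasurableSingletonClass (ZMod 2) := ⟨fun _ => trivial⟩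

/-- Shannon entropy, in bits, of a finitely-valued random variable `X` under `μ`. -/
noncomputable def entB {Ω : Type*} [MeasurableSpace Ω] {β : Type*} [Fintype β]
    (μ : Measure Ω) (X : Ω → β) : ℝ :=
  -∑ x : β, ((μ (X ⁻¹' {x})).toReal * Real.logb 2 ((μ (X ⁻¹' {x})).toReal))

/-- Mutual information, in bits, `I(X;Y) = H(X) + H(Y) - H(X,Y)`. -/
noncomputable def miB {Ω : Type*} [MeasurableSpace Ω] {β γ : Type*} [Fintype β] [Fintype γ]
    (μ : Measure Ω) (X : Ω → β) (Y : Ω → γ) : ℝ :=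
  entB μ X + entB μ Y - entB μ (fun ω => (X ω, Y ω))

/-- The `q × q` down-shift matrix `S` over `𝔽₂`, applied `k` times to a vector:
`(S^k x) i = x (i - k)` for `i ≥ k` and `0` otherwise. -/
def downShift (q k : ℕ) (x : Fin q → ZMod 2) : Fin q → ZMod 2 :=
  fun i => if h : k ≤ i.val then
      x ⟨i.val - k, Nat.lt_of_le_of_lt (Nat.sub_le _ _) i.isLt⟩
    else 0



lemma gibbs {ι : Type*} [Fintype ι] (p q : ι → ℝ) (hp : ∀ i, 0 ≤ p i) (hq : ∀ i, 0 ≤ q i)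
    (hpq : ∀ i, p i ≠ 0 → q i ≠ 0) (hsum : ∑ i, q i ≤ ∑ i, p i) :
    ∑ i, p i * Real.logb 2 (q i) ≤ ∑ i, p i * Real.logb 2 (p i) := by
  have h2 : (0:ℝ) < Real.log 2 := Real.log_pos (by norm_num)
  have key : ∀ i, p i * Real.logb 2 (q i) - p i * Real.logb 2 (p i) ≤ (q i - p i) / Real.log 2 := by
    intro i
    rcases eq_or_ne (p i) 0 with h | h
    · simp only [h, zero_mul, sub_zero, zero_sub, neg_zero, sub_self]
      exact div_nonneg (hq i) h2.le
    · have hppos : 0 < p i := lt_of_le_of_ne (hp i) (Ne.symm h)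
      have hqpos : 0 < q i := lt_of_le_of_ne (hq i) (Ne.symm (hpq i h))
      have : p i * Real.logb 2 (q i) - p i * Real.logb 2 (p i)
          = p i * Real.log (q i / p i) / Real.log 2 := by
        rw [Real.log_div (ne_of_gt hqpos) h]
        simp [Real.logb]
        ring
      rw [this]
      rw [div_le_div_iff_of_pos_right h2]
      calc p i * Real.log (q i / p i) ≤ p i * (q i / p i - 1) := by
            apply mul_le_mul_of_nonneg_left (Real.log_le_sub_one_of_pos (by positivity)) (hp i)
        _ = q i - p i := by field_simp
  calc ∑ i, p i * Real.logb 2 (q i)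
      ≤ ∑ i, (p i * Real.logb 2 (p i) + (q i - p i) / Real.log 2) := by
        apply Finset.sum_le_sum; intro i _; linarith [key i]
    _ = ∑ i, p i * Real.logb 2 (p i) + (∑ i, q i - ∑ i, p i) / Real.log 2 := by
        rw [Finset.sum_add_distrib, ← Finset.sum_div, Finset.sum_sub_distrib]
    _ ≤ ∑ i, p i * Real.logb 2 (p i) := by
        have : (∑ i, q i - ∑ i, p i) / Real.log 2 ≤ 0 := by
          apply div_nonpos_of_nonpos_of_nonneg <;> linarith
        linarith

section Meas
variable {Ω : Type*} [MeasurableSpace Ω] (μ : Measure Ω) [IsProbabilityMeasure μ]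
variable {β γ δ : Type*} [Fintype β] [MeasurableSpace β] [MeasurableSingletonClass β]
  [Fintype γ] [MeasurableSpace γ] [MeasurableSingletonClass γ]
  [Fintype δ] [MeasurableSpace δ] [MeasurableSingletonClass δ]

lemma sum_inter (s : Set Ω) (hs : MeasurableSet s) {Y : Ω → γ} (hY : Measurable Y) :
    ∑ y : γ, (μ (s ∩ Y ⁻¹' {y})).toReal = (μ s).toReal := by
  have hdisj : Pairwise (Function.onFun Disjoint fun y : γ => s ∩ Y ⁻¹' {y}) := by
    intro a b hab
    simp only [Function.onFun, Set.disjoint_left]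
    rintro ω ⟨-, ha⟩ ⟨-, hb⟩
    exact hab (by simp_all)
  have hmeas : ∀ y : γ, MeasurableSet (s ∩ Y ⁻¹' {y}) :=
    fun y => hs.inter (hY (measurableSet_singleton y))
  have hunion : (⋃ y : γ, s ∩ Y ⁻¹' {y}) = s := by
    ext ω; simp
  rw [← ENNReal.toReal_sum (fun y _ => measure_ne_top μ _)]
  rw [← tsum_fintype (L := SummationFilter.unconditional _), ← measure_iUnion hdisj hmeas, hunion]

lemma sum_pr {X : Ω → β} (hX : Measurable X) :
    ∑ x : β, (μ (X ⁻¹' {x})).toReal = 1 := by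
  have := sum_inter μ Set.univ MeasurableSet.univ hX
  simpa using this

lemma pair_preimage (X : Ω → β) (Y : Ω → γ) (x : β) (y : γ) :
    (fun ω => (X ω, Y ω)) ⁻¹' {(x, y)} = X ⁻¹' {x} ∩ Y ⁻¹' {y} := by
  ext ω; simp [Prod.ext_iff]

end Meas
section Ent
variable {Ω : Type*} [MeasurableSpace Ω] (μ : Measure Ω) [IsProbabilityMeasure μ]
variable {β γ δ : Type*} [Fintype β] [MeasurableSpace β] [MeasurableSingletonClass β]
  [Fintype γ] [MeasurableSpace γ] [MeasurableSingletonClass γ]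
  [Fintype δ] [MeasurableSpace δ] [MeasurableSingletonClass δ]

lemma entB_congr {X Y : Ω → β} (h : ∀ ω, X ω = Y ω) : entB μ X = entB μ Y := by
  have : X = Y := funext h
  rw [this]

/-- L1: deterministic data processing. -/
lemma entB_comp_le {X : Ω → β} (hX : Measurable X) (f : β → γ) :
    entB μ (fun ω => f (X ω)) ≤ entB μ X := by
  classical
  set p : β → ℝ := fun x => (μ (X ⁻¹' {x})).toReal with hp
  have hp0 : ∀ x, 0 ≤ p x := fun x => ENNReal.toReal_nonneg
  set Q : γ → ℝ := fun z => (μ ((fun ω => f (X ω)) ⁻¹' {z})).toReal with hQ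
  have hQeq : ∀ z, Q z = ∑ x ∈ Finset.univ.filter (fun x => f x = z), p x := by
    intro z
    have hmeas : MeasurableSet ((fun ω => f (X ω)) ⁻¹' {z}) := by
      exact (Measurable.of_discrete.comp hX) (measurableSet_singleton z)
    have := sum_inter μ ((fun ω => f (X ω)) ⁻¹' {z}) hmeas hX
    have heq : ∀ x : β, ((fun ω => f (X ω)) ⁻¹' {z}) ∩ X ⁻¹' {x}
        = if f x = z then X ⁻¹' {x} else ∅ := by
      intro x
      split_ifs with hfx
      · ext ω; simp_all
      · ext ω; simp_all
        intro h1 h2; rw [h2] at h1; exact hfx h1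
    rw [hQ]
    simp only
    rw [← this, Finset.sum_filter]
    apply Finset.sum_congr rfl
    intro x _
    rw [heq x]
    split_ifs <;> simp [hp]
  have key : ∑ x : β, p x * Real.logb 2 (p x) ≤ ∑ z : γ, Q z * Real.logb 2 (Q z) := by
    rw [← Finset.sum_fiberwise Finset.univ f (fun x => p x * Real.logb 2 (p x))]
    apply Finset.sum_le_sum
    intro z _
    rw [hQeq z]
    rw [Finset.sum_mul]
    apply Finset.sum_le_sum
    intro x hx
    rcases eq_or_ne (p x) 0 with h | h
    · simp [h]
    · have hppos : 0 < p x := lt_of_le_of_ne (hp0 x) (Ne.symm h)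
      apply mul_le_mul_of_nonneg_left _ (hp0 x)
      apply Real.logb_le_logb_of_le (by norm_num : (1:ℝ) < 2) hppos
      exact Finset.single_le_sum (fun i _ => hp0 i) hx
  simp only [entB]
  linarith [key]

/-- Marginal helper: `p z ≤ pX z.1` etc. -/
lemma pr_pair_le_fst (X : Ω → β) (Y : Ω → γ) (z : β × γ) :
    (μ ((fun ω => (X ω, Y ω)) ⁻¹' {z})).toReal ≤ (μ (X ⁻¹' {z.1})).toReal := by
  apply ENNReal.toReal_mono (measure_ne_top μ _)
  apply measure_mono
  intro ω hω
  simp only [Set.mem_preimage, Set.mem_singleton_iff] at *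
  rw [← hω]

lemma pr_pair_le_snd (X : Ω → β) (Y : Ω → γ) (z : β × γ) :
    (μ ((fun ω => (X ω, Y ω)) ⁻¹' {z})).toReal ≤ (μ (Y ⁻¹' {z.2})).toReal := by
  apply ENNReal.toReal_mono (measure_ne_top μ _)
  apply measure_mono
  intro ω hω
  simp only [Set.mem_preimage, Set.mem_singleton_iff] at *
  rw [← hω]

/-- Generic splitting of `∑ p·logb(pX·pY)`. -/
lemma helper_sum {p : β × γ → ℝ} {pX : β → ℝ} {pY : γ → ℝ}
    (hfst : ∀ x, ∑ y, p (x, y) = pX x) (hsnd : ∀ y, ∑ x, p (x, y) = pY y)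
    (h1 : ∀ z, p z ≠ 0 → pX z.1 ≠ 0) (h2 : ∀ z, p z ≠ 0 → pY z.2 ≠ 0) :
    ∑ z : β × γ, p z * Real.logb 2 (pX z.1 * pY z.2)
      = ∑ x, pX x * Real.logb 2 (pX x) + ∑ y, pY y * Real.logb 2 (pY y) := by
  have step1 : ∑ z : β × γ, p z * Real.logb 2 (pX z.1 * pY z.2)
      = ∑ z : β × γ, (p z * Real.logb 2 (pX z.1) + p z * Real.logb 2 (pY z.2)) := by
    apply Finset.sum_congr rfl
    intro z _
    rcases eq_or_ne (p z) 0 with h | h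
    · simp [h]
    · rw [Real.logb_mul (h1 z h) (h2 z h)]; ring
  rw [step1, Finset.sum_add_distrib]
  congr 1
  · rw [Fintype.sum_prod_type]
    apply Finset.sum_congr rfl
    intro x _
    have hr : ∀ y : γ, p (x, y) * Real.logb 2 (pX (x, y).1)
        = p (x, y) * Real.logb 2 (pX x) := fun y => rfl
    rw [Finset.sum_congr rfl (fun y _ => hr y), ← Finset.sum_mul, hfst]
  · rw [Fintype.sum_prod_type, Finset.sum_comm]
    apply Finset.sum_congr rfl
    intro y _
    have hr : ∀ x : β, p (x, y) * Real.logb 2 (pY (x, y).2)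
        = p (x, y) * Real.logb 2 (pY y) := fun x => rfl
    rw [Finset.sum_congr rfl (fun x _ => hr x), ← Finset.sum_mul, hsnd]

lemma pr_marg_fst {X : Ω → β} {Y : Ω → γ} (hX : Measurable X) (hY : Measurable Y) (x : β) :
    ∑ y, (μ ((fun ω => (X ω, Y ω)) ⁻¹' {(x, y)})).toReal = (μ (X ⁻¹' {x})).toReal := by
  rw [← sum_inter μ (X ⁻¹' {x}) (hX (measurableSet_singleton x)) hY]
  apply Finset.sum_congr rfl
  intro y _
  rw [pair_preimage]

lemma pr_marg_snd {X : Ω → β} {Y : Ω → γ} (hX : Measurable X) (hY : Measurable Y) (y : γ) :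
    ∑ x, (μ ((fun ω => (X ω, Y ω)) ⁻¹' {(x, y)})).toReal = (μ (Y ⁻¹' {y})).toReal := by
  rw [← sum_inter μ (Y ⁻¹' {y}) (hY (measurableSet_singleton y)) hX]
  apply Finset.sum_congr rfl
  intro x _
  rw [pair_preimage, Set.inter_comm]

/-- L4: subadditivity. -/
lemma entB_pair_le {X : Ω → β} {Y : Ω → γ} (hX : Measurable X) (hY : Measurable Y) :
    entB μ (fun ω => (X ω, Y ω)) ≤ entB μ X + entB μ Y := by
  classical
  set p : β × γ → ℝ := fun z => (μ ((fun ω => (X ω, Y ω)) ⁻¹' {z})).toReal with hpdef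
  set pX : β → ℝ := fun x => (μ (X ⁻¹' {x})).toReal with hpX
  set pY : γ → ℝ := fun y => (μ (Y ⁻¹' {y})).toReal with hpY
  have hfst : ∀ x, ∑ y, p (x, y) = pX x := fun x => pr_marg_fst μ hX hY x
  have hsnd : ∀ y, ∑ x, p (x, y) = pY y := fun y => pr_marg_snd μ hX hY y
  have hle1 : ∀ z, p z ≤ pX z.1 := fun z => pr_pair_le_fst μ X Y z
  have hle2 : ∀ z, p z ≤ pY z.2 := fun z => pr_pair_le_snd μ X Y z
  have hp0 : ∀ z, 0 ≤ p z := fun z => ENNReal.toReal_nonneg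
  have h1 : ∀ z, p z ≠ 0 → pX z.1 ≠ 0 := by
    intro z h; have := lt_of_le_of_ne (hp0 z) (Ne.symm h); exact ne_of_gt (lt_of_lt_of_le this (hle1 z))
  have h2 : ∀ z, p z ≠ 0 → pY z.2 ≠ 0 := by
    intro z h; have := lt_of_le_of_ne (hp0 z) (Ne.symm h); exact ne_of_gt (lt_of_lt_of_le this (hle2 z))
  have hgibbs : ∑ z : β × γ, p z * Real.logb 2 (pX z.1 * pY z.2)
      ≤ ∑ z : β × γ, p z * Real.logb 2 (p z) := by
    apply gibbs _ _ hp0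
    · intro z
      exact mul_nonneg ENNReal.toReal_nonneg ENNReal.toReal_nonneg
    · intro z h; exact mul_ne_zero (h1 z h) (h2 z h)
    · have : ∑ z : β × γ, pX z.1 * pY z.2 = (∑ x, pX x) * (∑ y, pY y) := by
        rw [Fintype.sum_prod_type, Finset.sum_mul]
        apply Finset.sum_congr rfl
        intro x _
        rw [Finset.mul_sum]
      rw [this, sum_pr μ hX, sum_pr μ hY, sum_pr μ (hX.prodMk hY)]
      norm_num
  rw [helper_sum hfst hsnd h1 h2] at hgibbs
  simp only [entB]
  linarith

/-- L5: additivity for independent variables. -/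
lemma entB_pair_indep {X : Ω → β} {Y : Ω → γ} (hX : Measurable X) (hY : Measurable Y)
    (hind : IndepFun X Y μ) :
    entB μ (fun ω => (X ω, Y ω)) = entB μ X + entB μ Y := by
  classical
  set pX : β → ℝ := fun x => (μ (X ⁻¹' {x})).toReal with hpX
  set pY : γ → ℝ := fun y => (μ (Y ⁻¹' {y})).toReal with hpY
  have hprod : ∀ z : β × γ, (μ ((fun ω => (X ω, Y ω)) ⁻¹' {z})).toReal = pX z.1 * pY z.2 := by
    intro z
    rw [pair_preimage X Y z.1 z.2]
    rw [hind.measure_inter_preimage_eq_mul _ _ (measurableSet_singleton _) (measurableSet_singleton _)]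
    rw [ENNReal.toReal_mul]
  have hfst : ∀ x, ∑ y, pX x * pY y = pX x := by
    intro x; rw [← Finset.mul_sum, sum_pr μ hY, mul_one]
  have hsnd : ∀ y, ∑ x, pX x * pY y = pY y := by
    intro y; rw [← Finset.sum_mul, sum_pr μ hX, one_mul]
  have h1 : ∀ z : β × γ, pX z.1 * pY z.2 ≠ 0 → pX z.1 ≠ 0 := by
    intro z h; exact fun hc => h (by rw [hc, zero_mul])
  have h2 : ∀ z : β × γ, pX z.1 * pY z.2 ≠ 0 → pY z.2 ≠ 0 := by
    intro z h; exact fun hc => h (by rw [hc, mul_zero])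
  have := helper_sum (p := fun z : β × γ => pX z.1 * pY z.2) (pX := pX) (pY := pY)
    hfst hsnd h1 h2
  simp only [entB, hprod]
  rw [this]
  ring

/-- L6: entropy bounded by log of cardinality. -/
lemma entB_le_card {X : Ω → β} (hX : Measurable X) :
    entB μ X ≤ Real.logb 2 (Fintype.card β) := by
  classical
  rcases isEmpty_or_nonempty β with hβ | hβ
  · exfalso
    have := sum_pr μ hX
    simp [Finset.univ_eq_empty] at this
  set p : β → ℝ := fun x => (μ (X ⁻¹' {x})).toReal with hp
  have hcard : (0:ℝ) < Fintype.card β := by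
    have := Fintype.card_pos (α := β)
    exact_mod_cast this
  have hgibbs : ∑ x : β, p x * Real.logb 2 ((Fintype.card β : ℝ)⁻¹)
      ≤ ∑ x : β, p x * Real.logb 2 (p x) := by
    apply gibbs _ _ (fun x => ENNReal.toReal_nonneg)
    · intro x; positivity
    · intro x _; positivity
    · rw [sum_pr μ hX, Finset.sum_const]
      simp only [nsmul_eq_mul, Finset.card_univ]
      rw [mul_inv_cancel₀ (ne_of_gt hcard)]
  rw [← Finset.sum_mul, sum_pr μ hX, one_mul, Real.logb_inv] at hgibbs
  simp only [entB]
  linarith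

end Ent
section Submod
variable {Ω : Type*} [MeasurableSpace Ω] (μ : Measure Ω) [IsProbabilityMeasure μ]
variable {β γ δ : Type*} [Fintype β] [MeasurableSpace β] [MeasurableSingletonClass β]
  [Fintype γ] [MeasurableSpace γ] [MeasurableSingletonClass γ]
  [Fintype δ] [MeasurableSpace δ] [MeasurableSingletonClass δ]

/-- L7: submodularity `H(X,Y,Z) + H(X) ≤ H(X,Y) + H(X,Z)`. -/
lemma entB_submod {X : Ω → β} {Y : Ω → γ} {Z : Ω → δ}
    (hX : Measurable X) (hY : Measurable Y) (hZ : Measurable Z) :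
    entB μ (fun ω => (X ω, Y ω, Z ω)) + entB μ X
      ≤ entB μ (fun ω => (X ω, Y ω)) + entB μ (fun ω => (X ω, Z ω)) := by
  classical
  set p : β × γ × δ → ℝ := fun t => (μ ((fun ω => (X ω, Y ω, Z ω)) ⁻¹' {t})).toReal with hpdef
  set pXY : β × γ → ℝ := fun w => (μ ((fun ω => (X ω, Y ω)) ⁻¹' {w})).toReal with hpXY
  set pXZ : β × δ → ℝ := fun w => (μ ((fun ω => (X ω, Z ω)) ⁻¹' {w})).toReal with hpXZ
  set pX : β → ℝ := fun x => (μ (X ⁻¹' {x})).toReal with hpX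
  have hp0 : ∀ t, 0 ≤ p t := fun t => ENNReal.toReal_nonneg
  have hpXY0 : ∀ w, 0 ≤ pXY w := fun w => ENNReal.toReal_nonneg
  have hpXZ0 : ∀ w, 0 ≤ pXZ w := fun w => ENNReal.toReal_nonneg
  have hpX0 : ∀ x, 0 ≤ pX x := fun x => ENNReal.toReal_nonneg
  -- preimage reshuffles
  have hre1 : ∀ x y z, ((fun ω => (X ω, Y ω, Z ω)) ⁻¹' {(x, y, z)})
      = ((fun ω => ((X ω, Y ω), Z ω)) ⁻¹' {((x, y), z)}) := by
    intro x y z; ext ω; simp [Prod.ext_iff]; tauto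
  have hre2 : ∀ x y z, ((fun ω => (X ω, Y ω, Z ω)) ⁻¹' {(x, y, z)})
      = ((fun ω => ((X ω, Z ω), Y ω)) ⁻¹' {((x, z), y)}) := by
    intro x y z; ext ω; simp [Prod.ext_iff]; tauto
  have hre3 : ∀ (x : β) (w : γ × δ), ((fun ω => (X ω, Y ω, Z ω)) ⁻¹' {(x, w)})
      = ((fun ω => (X ω, (Y ω, Z ω))) ⁻¹' {(x, w)}) := by
    intro x w; rfl
  -- marginals
  have mZ : ∀ x y, ∑ z, p (x, y, z) = pXY (x, y) := by
    intro x y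
    simp only [hpdef, hpXY]
    rw [← pr_marg_fst μ (hX.prodMk hY) hZ (x, y)]
    apply Finset.sum_congr rfl
    intro z _
    rw [hre1]
  have mY : ∀ x z, ∑ y, p (x, y, z) = pXZ (x, z) := by
    intro x z
    simp only [hpdef, hpXZ]
    rw [← pr_marg_fst μ (hX.prodMk hZ) hY (x, z)]
    apply Finset.sum_congr rfl
    intro y _
    rw [hre2]
  have mX : ∀ x, ∑ w : γ × δ, p (x, w) = pX x := by
    intro x
    simp only [hpdef, hpX]
    exact pr_marg_fst μ hX (hY.prodMk hZ) x
  -- pointwise bounds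
  have hsub : ∀ (s t : Set Ω), s ⊆ t → (μ s).toReal ≤ (μ t).toReal :=
    fun s t h => ENNReal.toReal_mono (measure_ne_top μ _) (measure_mono h)
  have bXY : ∀ t : β × γ × δ, p t ≤ pXY (t.1, t.2.1) := by
    rintro ⟨x, y, z⟩
    apply hsub
    intro ω hω
    simp only [Set.mem_preimage, Set.mem_singleton_iff, Prod.ext_iff] at *
    tauto
  have bXZ : ∀ t : β × γ × δ, p t ≤ pXZ (t.1, t.2.2) := by
    rintro ⟨x, y, z⟩
    apply hsub
    intro ω hω
    simp only [Set.mem_preimage, Set.mem_singleton_iff, Prod.ext_iff] at *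
    tauto
  have bX : ∀ t : β × γ × δ, p t ≤ pX t.1 := by
    rintro ⟨x, y, z⟩
    apply hsub
    intro ω hω
    simp only [Set.mem_preimage, Set.mem_singleton_iff, Prod.ext_iff] at *
    tauto
  have bXYle : ∀ (x : β) (y : γ), pXY (x, y) ≤ pX x := by
    intro x y
    apply hsub
    intro ω hω
    simp only [Set.mem_preimage, Set.mem_singleton_iff, Prod.ext_iff] at *
    tauto
  -- the q function
  set q : β × γ × δ → ℝ := fun t => pXY (t.1, t.2.1) * pXZ (t.1, t.2.2) / pX t.1 with hqdef
  have sum3 : ∀ f : β × γ × δ → ℝ, ∑ t, f t = ∑ x, ∑ y, ∑ z, f (x, y, z) := by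
    intro f
    rw [Fintype.sum_prod_type]
    apply Finset.sum_congr rfl
    intro x _
    rw [Fintype.sum_prod_type]
  have hgibbs : ∑ t, p t * Real.logb 2 (q t) ≤ ∑ t, p t * Real.logb 2 (p t) := by
    apply gibbs _ _ hp0
    · intro t
      apply div_nonneg (mul_nonneg (hpXY0 _) (hpXZ0 _)) (hpX0 _)
    · intro t h
      have hppos : 0 < p t := lt_of_le_of_ne (hp0 t) (Ne.symm h)
      have h1 : 0 < pXY (t.1, t.2.1) := lt_of_lt_of_le hppos (bXY t)
      have h2 : 0 < pXZ (t.1, t.2.2) := lt_of_lt_of_le hppos (bXZ t)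
      have h3 : 0 < pX t.1 := lt_of_lt_of_le hppos (bX t)
      positivity
    · rw [sum_pr μ ((hX.prodMk (hY.prodMk hZ)))]
      rw [sum3]
      have perx : ∀ x, ∑ y, ∑ z, q (x, y, z) ≤ pX x := by
        intro x
        rcases eq_or_ne (pX x) 0 with h | h
        · have : ∀ y, pXY (x, y) = 0 := by
            intro y
            exact le_antisymm (h ▸ bXYle x y) (hpXY0 _)
          rw [h]
          apply le_of_eq
          apply Finset.sum_eq_zero
          intro y _
          apply Finset.sum_eq_zero
          intro z _
          rw [hqdef]; simp only
          rw [this y]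
          simp
        · have step : ∀ y, ∑ z, q (x, y, z) = pXY (x, y) * pX x / pX x := by
            intro y
            have : ∀ z, q (x, y, z) = pXY (x, y) * pXZ (x, z) / pX x := fun z => rfl
            rw [Finset.sum_congr rfl (fun z _ => this z)]
            rw [← Finset.sum_div, ← Finset.mul_sum]
            rw [pr_marg_fst μ hX hZ x]
          rw [Finset.sum_congr rfl (fun y _ => step y)]
          rw [← Finset.sum_div, ← Finset.sum_mul]
          rw [pr_marg_fst μ hX hY x]
          rw [mul_div_assoc, div_self h, mul_one]
      calc ∑ x, ∑ y, ∑ z, q (x, y, z) ≤ ∑ x, pX x :=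
            Finset.sum_le_sum (fun x _ => perx x)
        _ = 1 := sum_pr μ hX
  -- expand logb q
  have hexp : ∑ t, p t * Real.logb 2 (q t)
      = ∑ t, p t * Real.logb 2 (pXY (t.1, t.2.1))
        + ∑ t, p t * Real.logb 2 (pXZ (t.1, t.2.2))
        - ∑ t, p t * Real.logb 2 (pX t.1) := by
    rw [← Finset.sum_add_distrib, ← Finset.sum_sub_distrib]
    apply Finset.sum_congr rfl
    intro t _
    rcases eq_or_ne (p t) 0 with h | h
    · simp [h]
    · have hppos : 0 < p t := lt_of_le_of_ne (hp0 t) (Ne.symm h)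
      have h1 : pXY (t.1, t.2.1) ≠ 0 := ne_of_gt (lt_of_lt_of_le hppos (bXY t))
      have h2 : pXZ (t.1, t.2.2) ≠ 0 := ne_of_gt (lt_of_lt_of_le hppos (bXZ t))
      have h3 : pX t.1 ≠ 0 := ne_of_gt (lt_of_lt_of_le hppos (bX t))
      rw [hqdef]; simp only
      rw [Real.logb_div (mul_ne_zero h1 h2) h3, Real.logb_mul h1 h2]
      ring
  -- collapse the three sums
  have hS1 : ∑ t : β × γ × δ, p t * Real.logb 2 (pXY (t.1, t.2.1))
      = ∑ w : β × γ, pXY w * Real.logb 2 (pXY w) := by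
    rw [sum3, Fintype.sum_prod_type]
    apply Finset.sum_congr rfl
    intro x _
    apply Finset.sum_congr rfl
    intro y _
    have : ∀ z : δ, p (x, y, z) * Real.logb 2 (pXY ((x, y, z).1, (x, y, z).2.1))
        = p (x, y, z) * Real.logb 2 (pXY (x, y)) := fun z => rfl
    rw [Finset.sum_congr rfl (fun z _ => this z), ← Finset.sum_mul, mZ]
  have hS2 : ∑ t : β × γ × δ, p t * Real.logb 2 (pXZ (t.1, t.2.2))
      = ∑ w : β × δ, pXZ w * Real.logb 2 (pXZ w) := by
    rw [sum3, Fintype.sum_prod_type]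
    apply Finset.sum_congr rfl
    intro x _
    rw [Finset.sum_comm]
    apply Finset.sum_congr rfl
    intro z _
    have : ∀ y : γ, p (x, y, z) * Real.logb 2 (pXZ ((x, y, z).1, (x, y, z).2.2))
        = p (x, y, z) * Real.logb 2 (pXZ (x, z)) := fun y => rfl
    rw [Finset.sum_congr rfl (fun y _ => this y), ← Finset.sum_mul, mY]
  have hS3 : ∑ t : β × γ × δ, p t * Real.logb 2 (pX t.1)
      = ∑ x : β, pX x * Real.logb 2 (pX x) := by
    rw [Fintype.sum_prod_type]
    apply Finset.sum_congr rfl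
    intro x _
    have : ∀ w : γ × δ, p (x, w) * Real.logb 2 (pX (x, w).1)
        = p (x, w) * Real.logb 2 (pX x) := fun w => rfl
    rw [Finset.sum_congr rfl (fun w _ => this w), ← Finset.sum_mul, mX]
  rw [hexp, hS1, hS2, hS3] at hgibbs
  simp only [entB]
  linarith
end Submod
section Aux

/-- Reassemble a vector from its first `L` and last `k` coordinates. -/
def reassembleV (L k n : ℕ) (hLk : L + k = n)
    (p : (Fin L → ZMod 2) × (Fin k → ZMod 2)) : Fin n → ZMod 2 :=
  fun i => if h : i.val < L then p.1 ⟨i.val, h⟩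
    else p.2 ⟨i.val - L, by have := i.isLt; omega⟩

/-- Split a vector into its first `a` and last `b` coordinates. -/
def splitV (a b n : ℕ) (h : a + b = n) (y : Fin n → ZMod 2) :
    (Fin a → ZMod 2) × (Fin b → ZMod 2) :=
  (fun j => y ⟨j.val, by have := j.isLt; omega⟩,
   fun j => y ⟨a + j.val, by have := j.isLt; omega⟩)

lemma reassembleV_splitV (L k n : ℕ) (h : L + k = n) (y : Fin n → ZMod 2) :
    reassembleV L k n h (splitV L k n h y) = y := by
  funext i
  have hi := i.isLt
  simp only [reassembleV, splitV]
  split_ifs with h1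
  · exact congrArg y (Fin.ext rfl)
  · exact congrArg y (Fin.ext (by simp; omega))

/-- The deterministic map producing `y_a'` from `(A, v)`. -/
def gmapV (n₁ n₂ m₁ m₂ : ℕ)
    (p : (Fin (n₁ - n₂) → ZMod 2) × (Fin n₂ → ZMod 2)) :
    Fin (n₁ - (m₂ - n₂)) → ZMod 2 :=
  fun i =>
    (if h : n₁ - m₁ ≤ i.val ∧ i.val - (n₁ - m₁) < n₁ - n₂ then p.1 ⟨i.val - (n₁ - m₁), h.2⟩ else 0)
    + (if h : n₁ - m₂ ≤ i.val ∧ i.val - (n₁ - m₂) < n₂ then p.2 ⟨i.val - (n₁ - m₂), h.2⟩ else 0)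

/-- From `(A, (D, B))` recover `((A, B), v)` where `v = B + D`. -/
def xorMapV (a b : ℕ)
    (t : (Fin a → ZMod 2) × (Fin b → ZMod 2) × (Fin b → ZMod 2)) :
    ((Fin a → ZMod 2) × (Fin b → ZMod 2)) × (Fin b → ZMod 2) :=
  ((t.1, t.2.2), fun j => t.2.2 j + t.2.1 j)

end Aux

section Workhorse
variable {Ω : Type*} [MeasurableSpace Ω] (μ : Measure Ω) [IsProbabilityMeasure μ]
variable {β γ : Type*} [Fintype β] [MeasurableSpace β] [MeasurableSingletonClass β]
  [Fintype γ] [MeasurableSpace γ] [MeasurableSingletonClass γ]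

lemma entB_le_of_comp {W : Ω → β} {V : Ω → γ} (hV : Measurable V) (f : γ → β)
    (h : ∀ ω, W ω = f (V ω)) : entB μ W ≤ entB μ V := by
  have : entB μ W = entB μ (fun ω => f (V ω)) := entB_congr μ h
  rw [this]
  exact entB_comp_le μ hV f

end Workhorse
/-- equations (151)–(157): in the ADT deterministic model with `q = n₁`,
if `n₁ − 2n₂ ≥ m₁ − m₂` and `n₂ ≤ m₂ ≤ m₁`, then for independent `x₁, x₂`:
`H(y_a) − H(y_b) ≤ m₂ − n₂` (entropies in bits), where
`y_a = S^{q−m₁}x₁ ⊕ S^{q−m₂}x₂` and `y_b = S^{q−n₁}x₁ ⊕ S^{q−n₂}x₂`. -/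
theorem stmt13 {Ω : Type*} [MeasurableSpace Ω] (μ : Measure Ω) [IsProbabilityMeasure μ]
    (m₁ m₂ n₁ n₂ : ℕ) (hn2m2 : n₂ ≤ m₂) (hm : m₂ ≤ m₁) (hmax : m₁ ≤ n₁)
    (hcond : m₁ + 2 * n₂ ≤ n₁ + m₂)
    (x₁ x₂ : Ω → Fin n₁ → ZMod 2)
    (hx₁ : Measurable x₁) (hx₂ : Measurable x₂)
    (hindep : IndepFun x₁ x₂ μ) :
    entB μ (fun ω => downShift n₁ (n₁ - m₁) (x₁ ω) + downShift n₁ (n₁ - m₂) (x₂ ω)) -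
    entB μ (fun ω => downShift n₁ (n₁ - n₁) (x₁ ω) + downShift n₁ (n₁ - n₂) (x₂ ω)) ≤
      (m₂ : ℝ) - (n₂ : ℝ) := by
  classical
  have hn2n1 : n₂ ≤ n₁ := le_trans hn2m2 (le_trans hm hmax)
  have hsplitAB : (n₁ - n₂) + n₂ = n₁ := by omega
  have hsplitV : n₂ + (n₁ - n₂) = n₁ := by omega
  have hLk : (n₁ - (m₂ - n₂)) + (m₂ - n₂) = n₁ := by omega
  set ya : Ω → Fin n₁ → ZMod 2 :=
    fun ω => downShift n₁ (n₁ - m₁) (x₁ ω) + downShift n₁ (n₁ - m₂) (x₂ ω) with hya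
  set yb : Ω → Fin n₁ → ZMod 2 :=
    fun ω => downShift n₁ (n₁ - n₁) (x₁ ω) + downShift n₁ (n₁ - n₂) (x₂ ω) with hyb
  set A : Ω → Fin (n₁ - n₂) → ZMod 2 :=
    fun ω => (splitV (n₁ - n₂) n₂ n₁ hsplitAB (x₁ ω)).1 with hA
  set B : Ω → Fin n₂ → ZMod 2 :=
    fun ω => (splitV (n₁ - n₂) n₂ n₁ hsplitAB (x₁ ω)).2 with hB
  set v : Ω → Fin n₂ → ZMod 2 :=
    fun ω => (splitV n₂ (n₁ - n₂) n₁ hsplitV (x₂ ω)).1 with hv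
  set D : Ω → Fin n₂ → ZMod 2 := fun ω j => B ω j + v ω j with hD
  set ya1 : Ω → Fin (n₁ - (m₂ - n₂)) → ZMod 2 :=
    fun ω => (splitV (n₁ - (m₂ - n₂)) (m₂ - n₂) n₁ hLk (ya ω)).1 with hya1
  set ya2 : Ω → Fin (m₂ - n₂) → ZMod 2 :=
    fun ω => (splitV (n₁ - (m₂ - n₂)) (m₂ - n₂) n₁ hLk (ya ω)).2 with hya2
  -- measurability
  have mya : Measurable ya := by
    rw [hya]
    exact Measurable.comp (f := fun ω => (x₁ ω, x₂ ω))
      (g := fun t => downShift n₁ (n₁ - m₁) t.1 + downShift n₁ (n₁ - m₂) t.2)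
      Measurable.of_discrete (hx₁.prodMk hx₂)
  have myb : Measurable yb := by
    rw [hyb]
    exact Measurable.comp (f := fun ω => (x₁ ω, x₂ ω))
      (g := fun t => downShift n₁ (n₁ - n₁) t.1 + downShift n₁ (n₁ - n₂) t.2)
      Measurable.of_discrete (hx₁.prodMk hx₂)
  have mA : Measurable A := by
    rw [hA]
    exact Measurable.comp (g := fun t => (splitV (n₁ - n₂) n₂ n₁ hsplitAB t).1)
      Measurable.of_discrete hx₁
  have mB : Measurable B := by
    rw [hB]
    exact Measurable.comp (g := fun t => (splitV (n₁ - n₂) n₂ n₁ hsplitAB t).2)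
      Measurable.of_discrete hx₁
  have mv : Measurable v := by
    rw [hv]
    exact Measurable.comp (g := fun t => (splitV n₂ (n₁ - n₂) n₁ hsplitV t).1)
      Measurable.of_discrete hx₂
  have mD : Measurable D := by
    rw [hD]
    exact Measurable.comp (f := fun ω => (B ω, v ω))
      (g := fun t : (Fin n₂ → ZMod 2) × (Fin n₂ → ZMod 2) => fun j => t.1 j + t.2 j)
      Measurable.of_discrete (mB.prodMk mv)
  have mya1 : Measurable ya1 := by
    rw [hya1]
    exact Measurable.comp (g := fun t => (splitV (n₁ - (m₂ - n₂)) (m₂ - n₂) n₁ hLk t).1)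
      Measurable.of_discrete mya
  have mya2 : Measurable ya2 := by
    rw [hya2]
    exact Measurable.comp (g := fun t => (splitV (n₁ - (m₂ - n₂)) (m₂ - n₂) n₁ hLk t).2)
      Measurable.of_discrete mya
  -- Step 1: H(ya) ≤ H(ya1, ya2)
  have s1 : entB μ ya ≤ entB μ (fun ω => (ya1 ω, ya2 ω)) := by
    apply entB_le_of_comp μ (mya1.prodMk mya2)
      (reassembleV (n₁ - (m₂ - n₂)) (m₂ - n₂) n₁ hLk)
    intro ω
    exact (reassembleV_splitV _ _ _ hLk (ya ω)).symm
  -- Step 2: subadditivity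
  have s2 : entB μ (fun ω => (ya1 ω, ya2 ω)) ≤ entB μ ya1 + entB μ ya2 :=
    entB_pair_le μ mya1 mya2
  -- Step 3: cardinality bound for the bottom bits
  have s3 : entB μ ya2 ≤ ((m₂ - n₂ : ℕ) : ℝ) := by
    have h := entB_le_card μ mya2
    have hcard : ((Fintype.card (Fin (m₂ - n₂) → ZMod 2) : ℕ) : ℝ) = (2 : ℝ) ^ (m₂ - n₂) := by
      rw [Fintype.card_fun]
      push_cast
      norm_num
    rw [hcard] at h
    calc entB μ ya2 ≤ Real.logb 2 ((2 : ℝ) ^ (m₂ - n₂)) := h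
      _ = ((m₂ - n₂ : ℕ) : ℝ) := by
          rw [Real.logb_pow, Real.logb_self_eq_one (by norm_num)]
          ring
  -- Step 4: H(ya1) ≤ H(A, v)
  have s4 : entB μ ya1 ≤ entB μ (fun ω => (A ω, v ω)) := by
    apply entB_le_of_comp μ (mA.prodMk mv) (gmapV n₁ n₂ m₁ m₂)
    intro ω
    funext i
    have hi := i.isLt
    simp only [hya1, splitV, hya, Pi.add_apply, downShift, gmapV, hA, hv]
    congr 1
    · split_ifs <;> first | rfl | (exfalso; omega)
    · split_ifs <;> first | rfl | (exfalso; omega)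
  -- Step 5: independence of A and v
  have iAv : IndepFun A v μ :=
    hindep.comp (φ := fun t => (splitV (n₁ - n₂) n₂ n₁ hsplitAB t).1)
      (ψ := fun t => (splitV n₂ (n₁ - n₂) n₁ hsplitV t).1)
      Measurable.of_discrete Measurable.of_discrete
  have s5 : entB μ (fun ω => (A ω, v ω)) = entB μ A + entB μ v :=
    entB_pair_indep μ mA mv iAv
  -- Step 6: H((A,B), v) = H(A,B) + H(v) and H((A,B),v) ≤ H(A,D,B)
  have iABv : IndepFun (fun ω => (A ω, B ω)) v μ :=
    hindep.comp
      (φ := fun t => ((splitV (n₁ - n₂) n₂ n₁ hsplitAB t).1,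
        (splitV (n₁ - n₂) n₂ n₁ hsplitAB t).2))
      (ψ := fun t => (splitV n₂ (n₁ - n₂) n₁ hsplitV t).1)
      Measurable.of_discrete Measurable.of_discrete
  have s6a : entB μ (fun ω => ((A ω, B ω), v ω))
      = entB μ (fun ω => (A ω, B ω)) + entB μ v :=
    entB_pair_indep μ (mA.prodMk mB) mv iABv
  have hchar2 : ∀ a c : ZMod 2, a + (a + c) = c := by decide
  have s6b : entB μ (fun ω => ((A ω, B ω), v ω))
      ≤ entB μ (fun ω => (A ω, D ω, B ω)) := by
    apply entB_le_of_comp μ (mA.prodMk (mD.prodMk mB)) (xorMapV (n₁ - n₂) n₂)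
    intro ω
    simp only [xorMapV]
    have h2 : (fun j => B ω j + D ω j) = v ω := by
      funext j
      show B ω j + (B ω j + v ω j) = v ω j
      exact hchar2 _ _
    rw [h2]
  -- Step 7: submodularity
  have s7 : entB μ (fun ω => (A ω, D ω, B ω)) + entB μ A
      ≤ entB μ (fun ω => (A ω, D ω)) + entB μ (fun ω => (A ω, B ω)) :=
    entB_submod μ mA mD mB
  -- Step 8: H(A, D) ≤ H(yb)
  have s8 : entB μ (fun ω => (A ω, D ω)) ≤ entB μ yb := by
    apply entB_le_of_comp μ myb (splitV (n₁ - n₂) n₂ n₁ hsplitAB)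
    intro ω
    have e1 : (splitV (n₁ - n₂) n₂ n₁ hsplitAB (yb ω)).1 = A ω := by
      funext j
      have hj := j.isLt
      simp only [splitV, hyb, Pi.add_apply, downShift, hA]
      split_ifs <;>
        first
          | (exfalso; omega)
          | (rw [add_zero]; apply congrArg; simp only [Fin.mk.injEq]; omega)
    have e2 : (splitV (n₁ - n₂) n₂ n₁ hsplitAB (yb ω)).2 = D ω := by
      funext j
      have hj := j.isLt
      simp only [splitV, hyb, Pi.add_apply, downShift, hD, hB, hv, hA]
      split_ifs <;>
        first
          | (exfalso; omega)
          | (congr 1 <;> (apply congrArg; simp only [Fin.mk.injEq]; omega))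
    rw [← e1, ← e2]
  -- combine everything
  have hcast : ((m₂ - n₂ : ℕ) : ℝ) = (m₂ : ℝ) - (n₂ : ℝ) := by
    rw [Nat.cast_sub hn2m2]
  linarith [s1, s2, s3, s4, s5, s6a, s6b, s7, s8]
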